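/- For every n ≥ 2 there exist constants c(n), C(n) > 0 such that the following holds. Let ℓ₁, ℓ₂ ⊆ ℂⁿ be two complex lines through the origin making angle θ > 0 to each other, i.e. ℓ_j = ℂ·u_j with ‖u_j‖ = 1 and θ = arccos|⟨u₁, u₂⟩|. Then for every δ > 0, the 2n-dimensional Lebesgue measure of ι(N_δ(ℓ₁)) ∩ ι(N_δ(ℓ₂)) satisfies c(n)·δ^{2n}/ sin²θ ≤ |ι(N_δ(ℓ₁)) ∩ ι(N_δ(ℓ₂))| ≤ C(n)·δ^{2n}/ sin²θ, where N_δ denotes the closed δ-neighborhood in ℂⁿ ≅ ℝ^{2n}. -/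

import Mathlib

set_option maxHeartbeats 1000000


open MeasureTheory Metric

noncomputable section

/-- `ℂⁿ` with its Euclidean (Hermitian) metric. -/
abbrev Cspace (n : ℕ) := EuclideanSpace ℂ (Fin n)

/-- `ℝ^{2n}`, indexed so that the coordinate `(j, 0)` is the real part of the `j`-th complex
coordinate and `(j, 1)` is its imaginary part. -/
abbrev R2n (n : ℕ) := EuclideanSpace ℝ (Fin n × Fin 2)

/-- The usual embedding `ι : ℂⁿ → ℝ^{2n}`, sending each complex coordinate `z` to
`(Re z, Im z)`. -/
def iotaC {n : ℕ} (x : Cspace n) : R2n n :=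
  WithLp.toLp 2 (fun p : Fin n × Fin 2 => if p.2 = 0 then (x p.1).re else (x p.1).im)

/-- The complex line `ℂ·u` through the origin with direction `u`. -/
def cLine {n : ℕ} (u : Cspace n) : Set (Cspace n) := Set.range fun z : ℂ => z • u

namespace Stmt5

/-- `iotaC` as a real linear isometry equivalence. -/
def iotaLIE (n : ℕ) : Cspace n ≃ₗᵢ[ℝ] R2n n where
  toLinearEquiv :=
    { toFun := iotaC
      invFun := fun y => WithLp.toLp 2 (fun j => ⟨y (j, 0), y (j, 1)⟩)
      map_add' := by
        intro x y; ext p; by_cases h : p.2 = 0 <;> simp [iotaC, h]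
      map_smul' := by
        intro c x; ext p; by_cases h : p.2 = 0 <;> simp [iotaC, h]
      left_inv := by
        intro x; ext j; apply Complex.ext <;> simp [iotaC]
      right_inv := by
        intro y; ext p
        obtain ⟨j, k⟩ := p
        fin_cases k <;> simp [iotaC] }
  norm_map' := by
    intro x
    rw [EuclideanSpace.norm_eq, EuclideanSpace.norm_eq]
    congr 1
    rw [Fintype.sum_prod_type]
    refine Finset.sum_congr rfl fun j _ => ?_
    rw [Fin.sum_univ_two]
    norm_num
    simp only [iotaC]
    norm_num [sq, ← Complex.normSq_apply, ← Complex.sq_norm]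

@[simp] lemma iotaLIE_coe (n : ℕ) : ⇑(iotaLIE n) = iotaC := rfl


variable {n : ℕ}

/-- volumes of images under real linear isometry equivalences agree. -/
lemma vol_image_eq (e f : Cspace n ≃ₗᵢ[ℝ] R2n n) (X : Set (Cspace n))
    (hX : MeasurableSet (f '' X)) : volume (e '' X) = volume (f '' X) := by
  have h : e '' X = (f.symm.trans e) '' (f '' X) := by
    rw [← Set.image_comp]
    congr 1
    funext z
    simp [LinearIsometryEquiv.trans_apply]
  rw [h]
  set g := f.symm.trans e with hg
  have himg : g '' (f '' X) = g.symm ⁻¹' (f '' X) :=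
    congrFun (Set.image_eq_preimage_of_inverse (fun x => g.symm_apply_apply x)
      (fun x => g.apply_symm_apply x)) (f '' X)
  rw [himg, g.symm.measurePreserving.measure_preimage hX.nullMeasurableSet]

/-- membership in the `δ`-thickening of a complex line. -/
lemma mem_cthick_iff {u z : Cspace n} (hu : ‖u‖ = 1) {δ : ℝ} (hδ : 0 ≤ δ) :
    z ∈ cthickening δ (cLine u) ↔ ‖z - (inner ℂ u z : ℂ) • u‖ ≤ δ := by
  have huu : (inner ℂ u u : ℂ) = 1 := by
    rw [inner_self_eq_norm_sq_to_K, hu]; norm_num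
  constructor
  · intro hz
    rw [mem_cthickening_iff] at hz
    have key : (ENNReal.ofReal ‖z - (inner ℂ u z : ℂ) • u‖) ≤ Metric.infEDist z (cLine u) := by
      rw [Metric.le_infEDist]
      rintro y ⟨w, rfl⟩
      rw [edist_dist, dist_eq_norm]
      apply ENNReal.ofReal_le_ofReal
      have horth : (inner ℂ (((inner ℂ u z : ℂ) - w) • u) (z - (inner ℂ u z : ℂ) • u) : ℂ) = 0 := by
        rw [inner_smul_left, inner_sub_right, inner_smul_right, huu]
        ring
      have hpyth := norm_add_sq_eq_norm_sq_add_norm_sq_of_inner_eq_zero _ _ horth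
      have hdec : ((inner ℂ u z : ℂ) - w) • u + (z - (inner ℂ u z : ℂ) • u) = z - w • u := by
        rw [sub_smul]; abel
      rw [hdec] at hpyth
      nlinarith [norm_nonneg (z - w • u), norm_nonneg (z - (inner ℂ u z : ℂ) • u),
        norm_nonneg (((inner ℂ u z : ℂ) - w) • u)]
    have := key.trans hz
    rwa [ENNReal.ofReal_le_ofReal_iff hδ] at this
  · intro h
    exact mem_cthickening_of_dist_le z ((inner ℂ u z : ℂ) • u) δ _ ⟨inner ℂ u z, rfl⟩
      (by rwa [dist_eq_norm])

/-- Volume of a "real box" in `R2n`. -/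
lemma volume_RBox (r : Fin n → ℝ) (hr : ∀ j, 0 ≤ r j) :
    volume {y : R2n n | ∀ p : Fin n × Fin 2, |y p| ≤ r p.1}
      = ENNReal.ofReal (∏ j, (2 * r j) ^ 2) := by
  have e := EuclideanSpace.volume_preserving_symm_measurableEquiv_toLp (Fin n × Fin 2)
  have hset : {y : R2n n | ∀ p : Fin n × Fin 2, |y p| ≤ r p.1}
      = (MeasurableEquiv.toLp 2 (Fin n × Fin 2 → ℝ)).symm ⁻¹'
        (Set.pi Set.univ fun p : Fin n × Fin 2 => Set.Icc (-(r p.1)) (r p.1)) := by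
    ext y
    simp [Set.mem_pi, MeasurableEquiv.coe_toLp_symm, abs_le, Pi.le_def, Prod.forall, forall_and]
  rw [hset, e.measure_preimage
      (MeasurableSet.univ_pi fun p => measurableSet_Icc).nullMeasurableSet,
    volume_pi_pi]
  simp only [Real.volume_Icc, sub_neg_eq_add]
  rw [← ENNReal.ofReal_prod_of_nonneg (fun p _ => by linarith [hr p.1])]
  rw [Fintype.prod_prod_type]
  congr 1
  refine Finset.prod_congr rfl fun j _ => ?_
  rw [Fin.prod_univ_two]
  simp only [Prod.fst]
  ring


lemma norm_sq_eq (x : EuclideanSpace ℂ (Fin n)) : ‖x‖ ^ 2 = ∑ j, ‖x j‖ ^ 2 := by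
  rw [EuclideanSpace.norm_eq, Real.sq_sqrt (Finset.sum_nonneg fun j _ => sq_nonneg _)]

lemma exists_onb [NeZero n] (hn : 2 ≤ n) (u₁ v : Cspace n) (hu : ‖u₁‖ = 1) (hv : ‖v‖ = 1)
    (huv : (inner ℂ u₁ v : ℂ) = 0) :
    ∃ b : OrthonormalBasis (Fin n) ℂ (Cspace n), b 0 = u₁ ∧ b 1 = v := by
  have h01 : (0 : Fin n) ≠ 1 := by
    simp [Fin.ext_iff, Fin.val_one', Nat.mod_eq_of_lt (show 1 < n by omega)]
  have huu : (inner ℂ u₁ u₁ : ℂ) = 1 := by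
    rw [inner_self_eq_norm_sq_to_K, hu]; norm_num
  have hvv : (inner ℂ v v : ℂ) = 1 := by
    rw [inner_self_eq_norm_sq_to_K, hv]; norm_num
  have hvu : (inner ℂ v u₁ : ℂ) = 0 := by
    rw [← inner_conj_symm, huv, map_zero]
  set g : Fin n → Cspace n := fun i => if i = 0 then u₁ else v with hg
  have horth : Orthonormal ℂ (({0, 1} : Set (Fin n)).restrict g) := by
    rw [orthonormal_iff_ite]
    rintro ⟨i, hi⟩ ⟨j, hj⟩
    rcases hi with hi | hi <;> rcases hj with hj | hj <;>
      subst hi <;> subst hj <;>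
      simp [hg, Set.restrict, hu, hv, h01, h01.symm, huu, hvv, huv, hvu, Subtype.mk.injEq, Subtype.ext_iff]
  have hcard : Module.finrank ℂ (Cspace n) = Fintype.card (Fin n) := by
    simp [finrank_euclideanSpace]
  obtain ⟨b, hb⟩ := horth.exists_orthonormalBasis_extension_of_card_eq hcard
  refine ⟨b, ?_, ?_⟩
  · have := hb 0 (by simp)
    simpa [hg] using this
  · have := hb 1 (by simp)
    simpa [hg, h01.symm] using this

/-- Restrict a complex linear isometry equivalence to the reals. -/
def realify (f : Cspace n ≃ₗᵢ[ℂ] Cspace n) : Cspace n ≃ₗᵢ[ℝ] Cspace n where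
  toLinearEquiv := f.toLinearEquiv.restrictScalars ℝ
  norm_map' := f.norm_map'

@[simp] lemma realify_coe (f : Cspace n ≃ₗᵢ[ℂ] Cspace n) : ⇑(realify f) = ⇑f := rfl


section Main

variable {u₁ u₂ : Cspace n} {a : ℂ} {s : ℝ} {v : Cspace n} {δ : ℝ}

lemma upper_incl (hn : 2 ≤ n) (hu₁ : ‖u₁‖ = 1) (hu₂ : ‖u₂‖ = 1)
    (hna : ‖a‖ ≤ 1) (hs_pos : 0 < s) (hs_le : s ≤ 1)
    (hv : ‖v‖ = 1) (hu1v : (inner ℂ u₁ v : ℂ) = 0)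
    (hdecomp : u₂ = a • u₁ + (s : ℂ) • v)
    (b : OrthonormalBasis (Fin n) ℂ (Cspace n)) [NeZero n]
    (hb0 : b 0 = u₁) (hb1 : b 1 = v)
    (hδ : 0 < δ) {z : Cspace n}
    (hzA : z ∈ cthickening δ (cLine u₁)) (hzB : z ∈ cthickening δ (cLine u₂)) :
    ∀ j : Fin n, ‖b.repr z j‖ ≤ if j = 0 then 3 * δ / s else δ := by
  have h01 : (0 : Fin n) ≠ 1 := by
    simp [Fin.ext_iff, Fin.val_one', Nat.mod_eq_of_lt (show 1 < n by omega)]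
  rw [mem_cthick_iff hu₁ hδ.le] at hzA
  rw [mem_cthick_iff hu₂ hδ.le] at hzB
  have hreprj : ∀ j, b.repr z j = inner ℂ (b j) z := fun j => b.repr_apply_apply z j
  have huu : (inner ℂ u₁ u₁ : ℂ) = 1 := by
    rw [inner_self_eq_norm_sq_to_K, hu₁]; norm_num
  have hvv : (inner ℂ v v : ℂ) = 1 := by
    rw [inner_self_eq_norm_sq_to_K, hv]; norm_num
  have hvu : (inner ℂ v u₁ : ℂ) = 0 := by rw [← inner_conj_symm, hu1v, map_zero]
  have hval : ∀ j : Fin n, j ≠ 0 → ‖b.repr z j‖ ≤ δ := by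
    intro j hj
    have hbu : (inner ℂ (b j) u₁ : ℂ) = 0 := by
      have hON := b.orthonormal
      rw [orthonormal_iff_ite] at hON
      have h2 := hON j 0
      rw [if_neg hj] at h2
      rw [← hb0]; exact h2
    have heq : b.repr z j = inner ℂ (b j) (z - (inner ℂ u₁ z : ℂ) • u₁) := by
      rw [inner_sub_right, inner_smul_right, hbu, mul_zero, sub_zero, hreprj]
    calc ‖b.repr z j‖ = ‖(inner ℂ (b j) (z - (inner ℂ u₁ z : ℂ) • u₁) : ℂ)‖ := by rw [heq]
      _ ≤ ‖b j‖ * ‖z - (inner ℂ u₁ z : ℂ) • u₁‖ := norm_inner_le_norm _ _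
      _ ≤ 1 * δ :=
          mul_le_mul (le_of_eq (b.orthonormal.1 j)) hzA (norm_nonneg _) zero_le_one
      _ = δ := one_mul δ
  intro j
  by_cases hj : j = 0
  swap
  · rw [if_neg hj]; exact hval j hj
  subst hj
  rw [if_pos rfl]
  set y : Cspace n := (s : ℂ) • u₁ - (starRingEnd ℂ a) • v with hy
  have hyu2 : (inner ℂ y u₂ : ℂ) = 0 := by
    rw [hdecomp, hy]
    simp only [inner_sub_left, inner_add_right, inner_smul_left, inner_smul_right,
      huu, hvv, hu1v, hvu, Complex.conj_ofReal, Complex.conj_conj]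
    ring
  have hyz : (inner ℂ y z : ℂ) = (s : ℂ) * (b.repr z 0) - a * (b.repr z 1) := by
    rw [hy]
    simp only [inner_sub_left, inner_smul_left, Complex.conj_ofReal, Complex.conj_conj]
    rw [hreprj 0, hreprj 1, hb0, hb1]
  have hyn : ‖y‖ ≤ 2 := by
    calc ‖y‖ ≤ ‖(s : ℂ) • u₁‖ + ‖(starRingEnd ℂ a) • v‖ := norm_sub_le _ _
      _ = s * 1 + ‖a‖ * 1 := by
          rw [norm_smul, norm_smul, RCLike.norm_conj, hu₁, hv, Complex.norm_real,
            Real.norm_eq_abs, abs_of_pos hs_pos]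
      _ ≤ 2 := by linarith
  have hb2 : ‖(inner ℂ y z : ℂ)‖ ≤ 2 * δ := by
    have hsplit : (inner ℂ y z : ℂ) = inner ℂ y (z - (inner ℂ u₂ z : ℂ) • u₂) := by
      rw [inner_sub_right, inner_smul_right, hyu2, mul_zero, sub_zero]
    rw [hsplit]
    calc ‖(inner ℂ y (z - (inner ℂ u₂ z : ℂ) • u₂) : ℂ)‖
        ≤ ‖y‖ * ‖z - (inner ℂ u₂ z : ℂ) • u₂‖ := norm_inner_le_norm _ _
      _ ≤ 2 * δ := mul_le_mul hyn hzB (norm_nonneg _) (by norm_num)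
  have hW1 : ‖b.repr z 1‖ ≤ δ := hval 1 (fun h => h01 h.symm)
  have hkey : s * ‖b.repr z 0‖ ≤ 3 * δ := by
    have h1 : ‖(s : ℂ) * b.repr z 0‖
        ≤ ‖(s : ℂ) * b.repr z 0 - a * b.repr z 1‖ + ‖a * b.repr z 1‖ := by
      have := norm_add_le ((s : ℂ) * b.repr z 0 - a * b.repr z 1) (a * b.repr z 1)
      simpa using this
    have h2 : ‖(s : ℂ) * b.repr z 0 - a * b.repr z 1‖ ≤ 2 * δ := by
      rw [← hyz]; exact hb2
    have h3 : ‖a * b.repr z 1‖ ≤ δ := by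
      rw [norm_mul]
      calc ‖a‖ * ‖b.repr z 1‖ ≤ 1 * δ :=
        mul_le_mul hna hW1 (norm_nonneg _) zero_le_one
        _ = δ := one_mul δ
    have h4 : ‖(s : ℂ) * b.repr z 0‖ = s * ‖b.repr z 0‖ := by
      rw [norm_mul, Complex.norm_real, Real.norm_eq_abs, abs_of_pos hs_pos]
    rw [h4] at h1
    linarith
  rw [le_div_iff₀ hs_pos]
  linarith [mul_comm s ‖b.repr z 0‖]


lemma lower_incl (hn : 2 ≤ n) (hu₁ : ‖u₁‖ = 1) (hu₂ : ‖u₂‖ = 1)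
    (hna : ‖a‖ ≤ 1) (hs_pos : 0 < s) (hs_le : s ≤ 1) (hs2 : s ^ 2 = 1 - ‖a‖ ^ 2)
    (hv : ‖v‖ = 1) (hu1v : (inner ℂ u₁ v : ℂ) = 0)
    (hdecomp : u₂ = a • u₁ + (s : ℂ) • v)
    (b : OrthonormalBasis (Fin n) ℂ (Cspace n)) [NeZero n]
    (hb0 : b 0 = u₁) (hb1 : b 1 = v)
    (hδ : 0 < δ) {z : Cspace n}
    (hz : ∀ j : Fin n, ‖b.repr z j‖ ≤ if j = 0 then δ / (2 * s) else δ / (2 * n)) :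
    z ∈ cthickening δ (cLine u₁) ∧ z ∈ cthickening δ (cLine u₂) := by
  have h01 : (0 : Fin n) ≠ 1 := by
    simp [Fin.ext_iff, Fin.val_one', Nat.mod_eq_of_lt (show 1 < n by omega)]
  have hN : (2 : ℝ) ≤ (n : ℝ) := by exact_mod_cast hn
  have hNpos : (0 : ℝ) < (n : ℝ) := by linarith
  have hW0 : b.repr z 0 = inner ℂ u₁ z := by rw [b.repr_apply_apply, hb0]
  have hz0 : ‖b.repr z 0‖ ≤ δ / (2 * s) := by have := hz 0; rwa [if_pos rfl] at this
  have hzj : ∀ j : Fin n, j ≠ 0 → ‖b.repr z j‖ ≤ δ / (2 * n) := by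
    intro j hj; have := hz j; rwa [if_neg hj] at this
  constructor
  · -- z near line u₁
    rw [mem_cthick_iff hu₁ hδ.le]
    have hrepr : b.repr (z - (inner ℂ u₁ z : ℂ) • u₁)
        = b.repr z - (inner ℂ u₁ z : ℂ) • EuclideanSpace.single (0 : Fin n) (1 : ℂ) := by
      rw [map_sub, _root_.map_smul, ← hb0, b.repr_self]
    have hnormeq : ‖z - (inner ℂ u₁ z : ℂ) • u₁‖ ^ 2
        = ∑ j, ‖(b.repr z - (inner ℂ u₁ z : ℂ) • EuclideanSpace.single (0 : Fin n) (1 : ℂ)) j‖ ^ 2 := by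
      rw [← hrepr, ← norm_sq_eq, b.repr.norm_map]
    have hcoord : ∀ j : Fin n,
        ‖(b.repr z - (inner ℂ u₁ z : ℂ) • EuclideanSpace.single (0 : Fin n) (1 : ℂ)) j‖ ^ 2
          ≤ (δ / (2 * n)) ^ 2 := by
      intro j
      by_cases hj : j = 0
      · subst hj
        simp [PiLp.sub_apply, PiLp.smul_apply, EuclideanSpace.single_apply, hW0]
        positivity
      · simp [PiLp.sub_apply, PiLp.smul_apply, EuclideanSpace.single_apply, hj]
        exact pow_le_pow_left₀ (norm_nonneg _) (hzj j hj) 2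
    have hsum : ‖z - (inner ℂ u₁ z : ℂ) • u₁‖ ^ 2 ≤ n * (δ / (2 * n)) ^ 2 := by
      rw [hnormeq]
      calc ∑ j, ‖(b.repr z - (inner ℂ u₁ z : ℂ) • EuclideanSpace.single (0 : Fin n) (1 : ℂ)) j‖ ^ 2
          ≤ Finset.univ.card • (δ / (2 * n)) ^ 2 :=
            Finset.sum_le_card_nsmul _ _ _ (fun j _ => hcoord j)
        _ = n * (δ / (2 * n)) ^ 2 := by
            rw [Finset.card_univ, Fintype.card_fin, nsmul_eq_mul]
    have hfin : (n : ℝ) * (δ / (2 * n)) ^ 2 ≤ δ ^ 2 := by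
      have h4 : (2 * (n : ℝ)) ^ 2 = 4 * (n : ℝ) ^ 2 := by ring
      rw [div_pow, h4, ← mul_div_assoc, div_le_iff₀ (by positivity)]
      have h5 : (n : ℝ) ≤ 4 * (n : ℝ) ^ 2 := by nlinarith
      nlinarith [mul_nonneg (sub_nonneg.2 h5) (sq_nonneg δ)]
    have hle : ‖z - (inner ℂ u₁ z : ℂ) • u₁‖ ^ 2 ≤ δ ^ 2 := le_trans hsum hfin
    have hnn := norm_nonneg (z - (inner ℂ u₁ z : ℂ) • u₁)
    clear hz hzj hcoord hnormeq hrepr hsum hfin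
    nlinarith [hle, hnn, hδ]
  · -- z near line u₂
    set c₂ : ℂ := (starRingEnd ℂ) a * b.repr z 0 with hc₂
    apply mem_cthickening_of_dist_le z (c₂ • u₂) δ (cLine u₂) ⟨c₂, rfl⟩
    rw [dist_eq_norm]
    set x : EuclideanSpace ℂ (Fin n) := b.repr z
      - c₂ • (a • EuclideanSpace.single (0 : Fin n) (1 : ℂ)
        + (s : ℂ) • EuclideanSpace.single (1 : Fin n) (1 : ℂ)) with hx
    have hrepr2 : b.repr (z - c₂ • u₂) = x := by
      rw [map_sub, _root_.map_smul, hdecomp, map_add, _root_.map_smul, _root_.map_smul,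
        ← hb0, ← hb1, b.repr_self, b.repr_self, hx]
    have hnormeq : ‖z - c₂ • u₂‖ ^ 2 = ∑ j, ‖x j‖ ^ 2 := by
      rw [← hrepr2, ← norm_sq_eq, b.repr.norm_map]
    -- coordinates
    have hmc : a * (starRingEnd ℂ) a = ((‖a‖ ^ 2 : ℝ) : ℂ) := by
      have hns : Complex.normSq a = ‖a‖ ^ 2 := by
        rw [Complex.normSq_eq_norm_sq]
      rw [Complex.mul_conj, hns]
    have h10 : (1 : Fin n) ≠ 0 := fun h => h01 h.symm
    have e00 : (EuclideanSpace.single (0 : Fin n) (1 : ℂ)) 0 = 1 := by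
      rw [EuclideanSpace.single_apply, if_pos rfl]
    have e10 : (EuclideanSpace.single (1 : Fin n) (1 : ℂ)) 0 = 0 := by
      rw [EuclideanSpace.single_apply, if_neg h01]
    have e01 : (EuclideanSpace.single (0 : Fin n) (1 : ℂ)) 1 = 0 := by
      rw [EuclideanSpace.single_apply, if_neg h10]
    have e11 : (EuclideanSpace.single (1 : Fin n) (1 : ℂ)) 1 = 1 := by
      rw [EuclideanSpace.single_apply, if_pos rfl]
    have hx0 : ‖x 0‖ ≤ δ / 2 := by
      have hval : x 0 = b.repr z 0 * (1 - ((‖a‖ ^ 2 : ℝ) : ℂ)) := by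
        rw [hx, hc₂]
        simp only [PiLp.sub_apply, PiLp.smul_apply, PiLp.add_apply, e00, e10,
          smul_eq_mul, mul_one, mul_zero, add_zero]
        rw [← hmc]
        ring
      rw [hval, norm_mul]
      have hnorm1a : ‖(1 - ((‖a‖ ^ 2 : ℝ) : ℂ))‖ = s ^ 2 := by
        rw [show (1 - ((‖a‖ ^ 2 : ℝ) : ℂ)) = (((1 - ‖a‖ ^ 2 : ℝ)) : ℂ) by push_cast; ring]
        rw [Complex.norm_real, Real.norm_eq_abs, abs_of_nonneg (by nlinarith), ← hs2]
      rw [hnorm1a]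
      calc ‖b.repr z 0‖ * s ^ 2 ≤ (δ / (2 * s)) * s ^ 2 :=
            mul_le_mul_of_nonneg_right hz0 (sq_nonneg s)
        _ = δ * s / 2 := by field_simp
        _ ≤ δ / 2 := by nlinarith
    have hx1 : ‖x 1‖ ≤ 3 * δ / 4 := by
      have hval : x 1 = b.repr z 1 - c₂ * (s : ℂ) := by
        rw [hx]
        simp only [PiLp.sub_apply, PiLp.smul_apply, PiLp.add_apply, e01, e11,
          smul_eq_mul, mul_one, mul_zero, zero_add]
      have hc2n : ‖c₂‖ ≤ δ / (2 * s) := by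
        rw [hc₂, norm_mul, RCLike.norm_conj]
        calc ‖a‖ * ‖b.repr z 0‖ ≤ 1 * (δ / (2 * s)) :=
              mul_le_mul hna hz0 (norm_nonneg _) zero_le_one
          _ = δ / (2 * s) := one_mul _
      have hd2n : δ / (2 * n) ≤ δ / 4 := by
        rw [div_le_div_iff₀ (by positivity) (by norm_num)]
        nlinarith
      calc ‖x 1‖ = ‖b.repr z 1 - c₂ * (s : ℂ)‖ := by rw [hval]
        _ ≤ ‖b.repr z 1‖ + ‖c₂ * (s : ℂ)‖ := norm_sub_le _ _
        _ ≤ δ / (2 * n) + (δ / (2 * s)) * s := by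
            apply add_le_add (hzj 1 h10)
            rw [norm_mul, Complex.norm_real, Real.norm_eq_abs, abs_of_pos hs_pos]
            exact mul_le_mul_of_nonneg_right hc2n hs_pos.le
        _ = δ / (2 * n) + δ / 2 := by
            congr 1
            field_simp
        _ ≤ δ / 4 + δ / 2 := by linarith
        _ = 3 * δ / 4 := by ring
    have hxj : ∀ j : Fin n, j ≠ 0 → j ≠ 1 → ‖x j‖ ≤ δ / (2 * n) := by
      intro j hj0 hj1
      have ej0 : (EuclideanSpace.single (0 : Fin n) (1 : ℂ)) j = 0 := by
        rw [EuclideanSpace.single_apply, if_neg hj0]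
      have ej1 : (EuclideanSpace.single (1 : Fin n) (1 : ℂ)) j = 0 := by
        rw [EuclideanSpace.single_apply, if_neg hj1]
      have hval : x j = b.repr z j := by
        rw [hx]
        simp only [PiLp.sub_apply, PiLp.smul_apply, PiLp.add_apply, ej0, ej1,
          smul_eq_mul, mul_zero, add_zero, sub_zero]
      rw [hval]
      exact hzj j hj0
    have hsum : ∑ j, ‖x j‖ ^ 2 ≤ (δ / 2) ^ 2 + ((3 * δ / 4) ^ 2 + n * (δ / (2 * n)) ^ 2) := by
      rw [← Finset.add_sum_erase _ _ (Finset.mem_univ (0 : Fin n))]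
      apply add_le_add (pow_le_pow_left₀ (norm_nonneg _) hx0 2)
      have h1mem : (1 : Fin n) ∈ Finset.univ.erase (0 : Fin n) :=
        Finset.mem_erase.2 ⟨h10, Finset.mem_univ _⟩
      rw [← Finset.add_sum_erase _ _ h1mem]
      apply add_le_add (pow_le_pow_left₀ (norm_nonneg _) hx1 2)
      calc ∑ j ∈ ((Finset.univ.erase (0 : Fin n)).erase 1), ‖x j‖ ^ 2
          ≤ ((Finset.univ.erase (0 : Fin n)).erase 1).card • (δ / (2 * n)) ^ 2 := by
            apply Finset.sum_le_card_nsmul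
            intro j hj
            have hj1 : j ≠ 1 := (Finset.mem_erase.1 hj).1
            have hj0 : j ≠ 0 := (Finset.mem_erase.1 (Finset.mem_erase.1 hj).2).1
            exact pow_le_pow_left₀ (norm_nonneg _) (hxj j hj0 hj1) 2
        _ ≤ (n : ℝ) * (δ / (2 * n)) ^ 2 := by
            rw [nsmul_eq_mul]
            apply mul_le_mul_of_nonneg_right _ (by positivity)
            calc ((((Finset.univ.erase (0 : Fin n)).erase 1).card : ℕ) : ℝ)
                ≤ ((Finset.univ : Finset (Fin n)).card : ℝ) := by
                  exact_mod_cast Finset.card_le_card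
                    ((Finset.erase_subset _ _).trans (Finset.erase_subset _ _))
              _ = n := by rw [Finset.card_univ, Fintype.card_fin]
    have hnn8 : (n : ℝ) * (δ / (2 * n)) ^ 2 ≤ δ ^ 2 / 8 := by
      have h4 : (2 * (n : ℝ)) ^ 2 = 4 * (n : ℝ) ^ 2 := by ring
      rw [div_pow, h4, ← mul_div_assoc, div_le_div_iff₀ (by positivity) (by norm_num)]
      have h5 : 8 * (n : ℝ) ≤ 4 * (n : ℝ) ^ 2 := by nlinarith
      nlinarith [mul_nonneg (sub_nonneg.2 h5) (sq_nonneg δ)]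
    have hfin : ‖z - c₂ • u₂‖ ^ 2 ≤ δ ^ 2 := by
      rw [hnormeq]
      nlinarith [hsum, hnn8, sq_nonneg δ, hδ]
    have hnn := norm_nonneg (z - c₂ • u₂)
    nlinarith [hfin, hnn, hδ]


end Main

def BoxC (r : Fin n → ℝ) : Set (Cspace n) :=
  {w | ∀ p : Fin n × Fin 2, |iotaC w p| ≤ r p.1}

lemma iotaC_apply_zero (w : Cspace n) (j : Fin n) : iotaC w (j, 0) = (w j).re := rfl

lemma iotaC_apply_one (w : Cspace n) (j : Fin n) : iotaC w (j, 1) = (w j).im := rfl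

lemma image_iota_BoxC (r : Fin n → ℝ) :
    iotaC '' BoxC r = {y : R2n n | ∀ p : Fin n × Fin 2, |y p| ≤ r p.1} := by
  have h : BoxC r = iotaC ⁻¹' {y : R2n n | ∀ p : Fin n × Fin 2, |y p| ≤ r p.1} := rfl
  rw [h]
  exact Set.image_preimage_eq _ (iotaLIE n).surjective

lemma measurableSet_RBox (r : Fin n → ℝ) :
    MeasurableSet {y : R2n n | ∀ p : Fin n × Fin 2, |y p| ≤ r p.1} := by
  have hset : {y : R2n n | ∀ p : Fin n × Fin 2, |y p| ≤ r p.1}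
      = (MeasurableEquiv.toLp 2 (Fin n × Fin 2 → ℝ)).symm ⁻¹'
        (Set.pi Set.univ fun p : Fin n × Fin 2 => Set.Icc (-(r p.1)) (r p.1)) := by
    ext y
    simp [Set.mem_pi, MeasurableEquiv.coe_toLp_symm, abs_le, Pi.le_def, Prod.forall, forall_and]
  rw [hset]
  exact (MeasurableEquiv.toLp 2 (Fin n × Fin 2 → ℝ)).symm.measurable
    (MeasurableSet.univ_pi fun p => measurableSet_Icc)

lemma volume_image_box (e : Cspace n ≃ₗᵢ[ℝ] Cspace n) (r : Fin n → ℝ) (hr : ∀ j, 0 ≤ r j) :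
    volume (⇑(iotaLIE n) '' (⇑e ⁻¹' BoxC r)) = ENNReal.ofReal (∏ j, (2 * r j) ^ 2) := by
  have h1 : ⇑e ⁻¹' BoxC r = ⇑e.symm '' BoxC r :=
    (congrFun (Set.image_eq_preimage_of_inverse
      (fun x => e.apply_symm_apply x) (fun x => e.symm_apply_apply x)) (BoxC r)).symm
  have h2 : ⇑(iotaLIE n) '' (⇑e.symm '' BoxC r) = ⇑(e.symm.trans (iotaLIE n)) '' BoxC r := by
    rw [← Set.image_comp]
    rfl
  have hmeas : MeasurableSet (⇑(iotaLIE n) '' BoxC r) := by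
    rw [iotaLIE_coe, image_iota_BoxC]
    exact measurableSet_RBox r
  rw [h1, h2, vol_image_eq _ (iotaLIE n) _ hmeas, iotaLIE_coe, image_iota_BoxC,
    volume_RBox r hr]

lemma prod_ite_val [NeZero n] (x y : ℝ) :
    (∏ j : Fin n, if j = 0 then x else y) = x * y ^ (n - 1) := by
  rw [← Finset.mul_prod_erase _ _ (Finset.mem_univ (0 : Fin n)), if_pos rfl]
  congr 1
  rw [Finset.prod_congr rfl (fun j hj => if_neg (Finset.mem_erase.1 hj).1),
    Finset.prod_const, Finset.card_erase_of_mem (Finset.mem_univ _), Finset.card_univ,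
    Fintype.card_fin]

end Stmt5

open Stmt5 in
/-- volume of the intersection of the `δ`-neighbourhoods of two complex
lines through the origin in `ℂⁿ`, embedded in `ℝ^{2n}`. -/
theorem statement5 (n : ℕ) (hn : 2 ≤ n) :
    ∃ c C : ℝ, 0 < c ∧ 0 < C ∧
      ∀ u₁ u₂ : Cspace n, ‖u₁‖ = 1 → ‖u₂‖ = 1 →
      ∀ θ : ℝ, θ = Real.arccos ‖(inner ℂ u₁ u₂ : ℂ)‖ → 0 < θ →
      ∀ δ : ℝ, 0 < δ →
        ENNReal.ofReal (c * δ ^ (2 * n) / Real.sin θ ^ 2) ≤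
            volume (iotaC '' cthickening δ (cLine u₁) ∩ iotaC '' cthickening δ (cLine u₂)) ∧
        volume (iotaC '' cthickening δ (cLine u₁) ∩ iotaC '' cthickening δ (cLine u₂)) ≤
            ENNReal.ofReal (C * δ ^ (2 * n) / Real.sin θ ^ 2) := by
  haveI : NeZero n := ⟨by omega⟩
  have hnR : (0 : ℝ) < (n : ℝ) := by exact_mod_cast (show 0 < n by omega)
  have hc : 0 < (1/4 : ℝ) * (1 / (2 * (n : ℝ))) ^ (2 * (n - 1)) := by
    apply mul_pos (by norm_num)
    apply pow_pos
    apply div_pos one_pos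
    linarith
  refine ⟨(1/4 : ℝ) * (1 / (2 * (n : ℝ))) ^ (2 * (n - 1)), 36 * 4 ^ (n - 1), hc,
    by positivity, ?_⟩
  intro u₁ u₂ hu₁ hu₂ θ hθeq hθpos δ hδ
  set a : ℂ := inner ℂ u₁ u₂ with ha
  have hna0 := norm_nonneg a
  have hna : ‖a‖ ≤ 1 := by
    have h := norm_inner_le_norm (𝕜 := ℂ) u₁ u₂
    rw [hu₁, hu₂] at h
    simpa using h
  have hlt : ‖a‖ < 1 := by
    have h := hθpos
    rw [hθeq] at h
    exact Real.arccos_pos.1 h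
  have h1a : 0 < 1 - ‖a‖ ^ 2 := by nlinarith
  have hs_eq : Real.sin θ = Real.sqrt (1 - ‖a‖ ^ 2) := by rw [hθeq, Real.sin_arccos]
  set s : ℝ := Real.sin θ with hsdef
  have hs_pos : 0 < s := by rw [hs_eq]; positivity
  have hs2 : s ^ 2 = 1 - ‖a‖ ^ 2 := by rw [hs_eq, Real.sq_sqrt h1a.le]
  have hs_le : s ≤ 1 := by nlinarith
  have hsC : ((s : ℝ) : ℂ) ≠ 0 := Complex.ofReal_ne_zero.2 hs_pos.ne'
  have huu : (inner ℂ u₁ u₁ : ℂ) = 1 := by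
    rw [inner_self_eq_norm_sq_to_K, hu₁]; norm_num
  have hmc : a * (starRingEnd ℂ) a = ((‖a‖ ^ 2 : ℝ) : ℂ) := by
    have hns : Complex.normSq a = ‖a‖ ^ 2 := by
      rw [Complex.normSq_eq_norm_sq]
    rw [Complex.mul_conj, hns]
  have hdiff_sq : ‖u₂ - a • u₁‖ ^ 2 = s ^ 2 := by
    have h21 : (inner ℂ u₂ (a • u₁) : ℂ) = ((‖a‖ ^ 2 : ℝ) : ℂ) := by
      rw [inner_smul_right, show (inner ℂ u₂ u₁ : ℂ) = (starRingEnd ℂ) a from by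
        rw [← inner_conj_symm, ha], hmc]
    rw [norm_sub_sq (𝕜 := ℂ), h21]
    rw [norm_smul, hu₁, hu₂]
    have hre : (RCLike.re (((‖a‖ ^ 2 : ℝ) : ℂ))) = ‖a‖ ^ 2 := by
      simp [← Complex.ofReal_pow]
    rw [hre]
    nlinarith [hs2]
  have hdiff : ‖u₂ - a • u₁‖ = s := by
    have h := congrArg Real.sqrt hdiff_sq
    rwa [Real.sqrt_sq (norm_nonneg _), Real.sqrt_sq hs_pos.le] at h
  set v : Cspace n := ((s : ℝ) : ℂ)⁻¹ • (u₂ - a • u₁) with hvdef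
  have hv : ‖v‖ = 1 := by
    rw [hvdef, norm_smul, norm_inv, Complex.norm_real, Real.norm_eq_abs,
      abs_of_pos hs_pos, hdiff]
    field_simp
  have hu1v : (inner ℂ u₁ v : ℂ) = 0 := by
    rw [hvdef, inner_smul_right, inner_sub_right, inner_smul_right, huu, ← ha]
    ring
  have hdecomp : u₂ = a • u₁ + ((s : ℝ) : ℂ) • v := by
    rw [hvdef, smul_inv_smul₀ hsC]
    abel
  obtain ⟨b, hb0, hb1⟩ := exists_onb hn u₁ v hu₁ hv hu1v
  set rL := realify (b.repr : Cspace n ≃ₗᵢ[ℂ] Cspace n) with hrL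
  set A := cthickening δ (cLine u₁) with hA
  set B := cthickening δ (cLine u₂) with hB
  set R : Fin n → ℝ := fun j => if j = 0 then 3 * δ / s else δ with hR
  set t : Fin n → ℝ := fun j => if j = 0 then δ / (4 * s) else δ / (4 * n) with ht
  have hRpos : ∀ j, 0 ≤ R j := by
    intro j; rw [hR]; dsimp only; split <;> positivity
  have htpos : ∀ j, 0 ≤ t j := by
    intro j; rw [ht]; dsimp only; split <;> positivity
  have hMeq : iotaC '' A ∩ iotaC '' B = iotaC '' (A ∩ B) :=
    (Set.image_inter (iotaLIE n).injective).symm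
  -- upper inclusion
  have hsubU : A ∩ B ⊆ ⇑rL ⁻¹' BoxC R := by
    rintro z ⟨hzA, hzB⟩
    have hub := upper_incl hn hu₁ hu₂ hna hs_pos hs_le hv hu1v hdecomp b hb0 hb1 hδ hzA hzB
    intro p
    obtain ⟨j, k⟩ := p
    have hj := hub j
    have hnorm : ‖b.repr z j‖ ≤ R j := by rw [hR]; exact hj
    fin_cases k
    · show |(b.repr z j).re| ≤ R j
      calc |(b.repr z j).re| ≤ ‖b.repr z j‖ := by
            exact Complex.abs_re_le_norm _
        _ ≤ R j := hnorm
    · show |(b.repr z j).im| ≤ R j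
      calc |(b.repr z j).im| ≤ ‖b.repr z j‖ := by
            exact Complex.abs_im_le_norm _
        _ ≤ R j := hnorm
  -- lower inclusion
  have hsubL : ⇑rL ⁻¹' BoxC t ⊆ A ∩ B := by
    intro z hz
    have hz' : ∀ j : Fin n, ‖b.repr z j‖ ≤ if j = 0 then δ / (2 * s) else δ / (2 * n) := by
      intro j
      have h0 : |(b.repr z j).re| ≤ t j := by
        have := hz (j, 0)
        rwa [iotaC_apply_zero] at this
      have h1 : |(b.repr z j).im| ≤ t j := by
        have := hz (j, 1)
        rwa [iotaC_apply_one] at this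
      have habs : ‖b.repr z j‖ ≤ 2 * t j := by
        calc ‖b.repr z j‖ ≤ |(b.repr z j).re| + |(b.repr z j).im| := by
              exact Complex.norm_le_abs_re_add_abs_im _
          _ ≤ 2 * t j := by linarith
      refine habs.trans (le_of_eq ?_)
      rw [ht]; dsimp only; split <;> ring
    exact lower_incl hn hu₁ hu₂ hna hs_pos hs_le hs2 hv hu1v hdecomp b hb0 hb1 hδ hz'
  have hvolU := volume_image_box rL R hRpos
  have hvolL := volume_image_box rL t htpos
  have h2n : 2 * n = 2 + 2 * (n - 1) := by omega
  constructor
  · -- lower volume bound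
    have hreal : (1/4 : ℝ) * (1 / (2 * (n : ℝ))) ^ (2 * (n - 1)) * δ ^ (2 * n) / s ^ 2
        = ∏ j, (2 * t j) ^ 2 := by
      have hcong : ∀ j : Fin n, (2 * t j) ^ 2
          = if j = 0 then (δ / (2 * s)) ^ 2 else (δ / (2 * n)) ^ 2 := by
        intro j; rw [ht]; dsimp only; split <;> ring
      rw [Finset.prod_congr rfl (fun j _ => hcong j), prod_ite_val]
      rw [h2n, pow_add, pow_mul, pow_mul, div_pow, div_pow, div_pow, one_pow]
      field_simp
      have h1 : (n : ℝ) ^ ((n - 1) * 2) * (n : ℝ)⁻¹ ^ ((n - 1) * 2) = 1 := by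
        rw [← mul_pow, mul_inv_cancel₀ hnR.ne', one_pow]
      have h2 : (1 / 4 : ℝ) ^ (n - 1) * 4 ^ (n - 1) = 1 := by
        rw [← mul_pow]; norm_num
      linear_combination (-(δ ^ ((n - 1) * 2) * 4 * (1 / 4 : ℝ) ^ (n - 1) * 4 ^ (n - 1))) * h1
        - δ ^ ((n - 1) * 2) * 4 * h2
    calc ENNReal.ofReal ((1/4 : ℝ) * (1 / (2 * (n : ℝ))) ^ (2 * (n - 1)) * δ ^ (2 * n) / s ^ 2)
        = ENNReal.ofReal (∏ j, (2 * t j) ^ 2) := by rw [hreal]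
      _ = volume (⇑(iotaLIE n) '' (⇑rL ⁻¹' BoxC t)) := hvolL.symm
      _ ≤ volume (⇑(iotaLIE n) '' (A ∩ B)) := measure_mono (Set.image_mono hsubL)
      _ = volume (iotaC '' A ∩ iotaC '' B) := by rw [iotaLIE_coe, hMeq]
  · -- upper volume bound
    have hreal : (36 : ℝ) * 4 ^ (n - 1) * δ ^ (2 * n) / s ^ 2 = ∏ j, (2 * R j) ^ 2 := by
      have hcong : ∀ j : Fin n, (2 * R j) ^ 2
          = if j = 0 then (6 * δ / s) ^ 2 else (2 * δ) ^ 2 := by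
        intro j; rw [hR]; dsimp only; split <;> ring
      rw [Finset.prod_congr rfl (fun j _ => hcong j), prod_ite_val]
      rw [h2n, pow_add, pow_mul, div_pow, mul_pow]
      field_simp
      ring
    calc volume (iotaC '' A ∩ iotaC '' B)
        = volume (⇑(iotaLIE n) '' (A ∩ B)) := by rw [iotaLIE_coe, hMeq]
      _ ≤ volume (⇑(iotaLIE n) '' (⇑rL ⁻¹' BoxC R)) :=
          measure_mono (Set.image_mono hsubU)
      _ = ENNReal.ofReal (∏ j, (2 * R j) ^ 2) := hvolU
      _ = ENNReal.ofReal ((36 : ℝ) * 4 ^ (n - 1) * δ ^ (2 * n) / s ^ 2) := by rw [hreal]
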